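/- The derivative of Φ(a) = cos(a)·E(√(1-tan²a)) satisfies Φ'(a) < 1/2 for every a in (0, π/4). -/

import Mathlib

open Real Set

noncomputable def ellK (k : ℝ) : ℝ :=
  ∫ θ in (0:ℝ)..(Real.pi/2), 1 / Real.sqrt (1 - k^2 * Real.sin θ ^ 2)

noncomputable def ellE (k : ℝ) : ℝ :=
  ∫ θ in (0:ℝ)..(Real.pi/2), Real.sqrt (1 - k^2 * Real.sin θ ^ 2)

-- basic facts about a point in (0, π/4)
lemma aux_facts {x : ℝ} (hx : x ∈ Ioo (0:ℝ) (Real.pi/4)) :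
    0 < Real.sin x ∧ 0 < Real.cos x ∧ 0 < Real.cos (2*x) := by
  obtain ⟨h0, h4⟩ := hx
  have hpi := Real.pi_pos
  refine ⟨Real.sin_pos_of_pos_of_lt_pi h0 (by linarith),
    Real.cos_pos_of_mem_Ioo ⟨by linarith, by linarith⟩,
    Real.cos_pos_of_mem_Ioo ⟨by linarith, by linarith⟩⟩

lemma inner_pos {x : ℝ} (hx : x ∈ Ioo (0:ℝ) (Real.pi/4)) (θ : ℝ) :
    Real.sin x ^ 2 ≤ Real.cos x ^ 2 - Real.cos (2*x) * Real.sin θ ^ 2 := by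
  obtain ⟨hs, hc, h2⟩ := aux_facts hx
  have hθ : Real.sin θ ^ 2 ≤ 1 := Real.sin_sq_le_one θ
  have := Real.cos_two_mul' x
  nlinarith

lemma deriv_pointwise {x θ : ℝ} (hx : x ∈ Ioo (0:ℝ) (Real.pi/4)) :
    HasDerivAt (fun y => Real.sqrt (Real.cos y ^ 2 - Real.cos (2*y) * Real.sin θ ^ 2))
      (Real.sin x * Real.cos x * (2 * Real.sin θ ^ 2 - 1) /
        Real.sqrt (Real.cos x ^ 2 - Real.cos (2*x) * Real.sin θ ^ 2)) x := by
  obtain ⟨hs, hc, h2⟩ := aux_facts hx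
  have hApos : 0 < Real.cos x ^ 2 - Real.cos (2*x) * Real.sin θ ^ 2 :=
    lt_of_lt_of_le (by positivity) (inner_pos hx θ)
  have hinner : HasDerivAt (fun y => Real.cos y ^ 2 - Real.cos (2*y) * Real.sin θ ^ 2)
      (2 * Real.sin x * Real.cos x * (2 * Real.sin θ ^ 2 - 1)) x := by
    have h1 : HasDerivAt (fun y => Real.cos y ^ 2) (2 * Real.cos x * (-Real.sin x)) x := by
      exact ((Real.hasDerivAt_cos x).pow 2).congr_deriv (by norm_num)
    have h2' : HasDerivAt (fun y => Real.cos (2*y) * Real.sin θ ^ 2)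
        (-Real.sin (2*x) * 2 * Real.sin θ ^ 2) x := by
      have := ((Real.hasDerivAt_cos (2*x)).comp x ((hasDerivAt_id x).const_mul 2)).mul_const
        (Real.sin θ ^ 2)
      refine this.congr_deriv ?_
      ring
    have := h1.sub h2'
    refine this.congr_deriv ?_
    rw [Real.sin_two_mul]
    ring
  have := hinner.sqrt (ne_of_gt hApos)
  convert this using 1
  have hsq : Real.sqrt (Real.cos x ^ 2 - Real.cos (2*x) * Real.sin θ ^ 2) ≠ 0 :=
    ne_of_gt (Real.sqrt_pos.mpr hApos)
  field_simp

lemma cont_A (a : ℝ) : Continuous (fun θ : ℝ => Real.cos a ^ 2 - Real.cos (2*a) * Real.sin θ ^ 2) := by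
  fun_prop

lemma main_hasDerivAt {a : ℝ} (ha : a ∈ Ioo (0:ℝ) (Real.pi/4)) :
    HasDerivAt (fun x => ∫ θ in (0:ℝ)..(Real.pi/2),
        Real.sqrt (Real.cos x ^ 2 - Real.cos (2*x) * Real.sin θ ^ 2))
      (∫ θ in (0:ℝ)..(Real.pi/2), Real.sin a * Real.cos a * (2 * Real.sin θ ^ 2 - 1) /
        Real.sqrt (Real.cos a ^ 2 - Real.cos (2*a) * Real.sin θ ^ 2)) a := by
  obtain ⟨ha0, ha4⟩ := ha
  set ε : ℝ := min a (Real.pi/4 - a) with hε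
  have hεpos : 0 < ε := lt_min ha0 (by linarith)
  have hball : Metric.ball a ε ⊆ Ioo (0:ℝ) (Real.pi/4) := by
    intro x hx
    rw [Metric.mem_ball, Real.dist_eq, abs_lt] at hx
    constructor
    · have := min_le_left a (Real.pi/4 - a); linarith [hx.1]
    · have := min_le_right a (Real.pi/4 - a); linarith [hx.2]
  have haI : a ∈ Ioo (0:ℝ) (Real.pi/4) := ⟨ha0, ha4⟩
  obtain ⟨hsa, hca, h2a⟩ := aux_facts haI
  have hres := intervalIntegral.hasDerivAt_integral_of_dominated_loc_of_deriv_le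
    (F := fun x θ => Real.sqrt (Real.cos x ^ 2 - Real.cos (2*x) * Real.sin θ ^ 2))
    (F' := fun x θ => Real.sin x * Real.cos x * (2 * Real.sin θ ^ 2 - 1) /
        Real.sqrt (Real.cos x ^ 2 - Real.cos (2*x) * Real.sin θ ^ 2))
    (bound := fun _ => (1:ℝ)) (μ := MeasureTheory.volume) (a := (0:ℝ)) (b := Real.pi/2) (Metric.ball_mem_nhds a hεpos)
    (Filter.Eventually.of_forall fun x =>
      (((cont_A x).sqrt)).aestronglyMeasurable)
    (((cont_A a).sqrt).intervalIntegrable _ _)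
    ?meas ?bound (intervalIntegrable_const) ?diff
  · exact hres.2
  case meas =>
    have hApos : ∀ θ : ℝ, 0 < Real.cos a ^ 2 - Real.cos (2*a) * Real.sin θ ^ 2 := fun θ =>
      lt_of_lt_of_le (by positivity) (inner_pos haI θ)
    apply Continuous.aestronglyMeasurable
    apply Continuous.div (by fun_prop) ((cont_A a).sqrt)
    exact fun θ => ne_of_gt (Real.sqrt_pos.mpr (hApos θ))
  case bound =>
    refine Filter.Eventually.of_forall fun θ _ x hx => ?_
    have hxI := hball hx
    obtain ⟨hsx, hcx, h2x⟩ := aux_facts hxI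
    have hApos : 0 < Real.cos x ^ 2 - Real.cos (2*x) * Real.sin θ ^ 2 :=
      lt_of_lt_of_le (by positivity) (inner_pos hxI θ)
    have hsqrt : Real.sin x ≤ Real.sqrt (Real.cos x ^ 2 - Real.cos (2*x) * Real.sin θ ^ 2) := by
      rw [show Real.sin x = Real.sqrt (Real.sin x ^ 2) by
        rw [Real.sqrt_sq hsx.le]]
      exact Real.sqrt_le_sqrt (inner_pos hxI θ)
    rw [Real.norm_eq_abs, abs_div, abs_of_nonneg (Real.sqrt_nonneg _)]
    rw [div_le_one (lt_of_lt_of_le hsx hsqrt)]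
    have h1 : |2 * Real.sin θ ^ 2 - 1| ≤ 1 := by
      rw [abs_le]
      constructor <;> nlinarith [Real.sin_sq_le_one θ, sq_nonneg (Real.sin θ)]
    have hcx1 : Real.cos x ≤ 1 := Real.cos_le_one x
    calc |Real.sin x * Real.cos x * (2 * Real.sin θ ^ 2 - 1)|
        = Real.sin x * Real.cos x * |2 * Real.sin θ ^ 2 - 1| := by
          rw [abs_mul, abs_of_nonneg (by positivity : (0:ℝ) ≤ Real.sin x * Real.cos x)]
      _ ≤ Real.sin x * Real.cos x * 1 := by
          apply mul_le_mul_of_nonneg_left h1 (by positivity)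
      _ ≤ Real.sin x := by nlinarith
      _ ≤ _ := hsqrt
  case diff =>
    refine Filter.Eventually.of_forall fun θ _ x hx => ?_
    exact deriv_pointwise (hball hx)

lemma sym_bound {a : ℝ} (ha : a ∈ Ioo (0:ℝ) (Real.pi/4)) (θ : ℝ) :
    (2 * Real.sin θ ^ 2 - 1) / Real.sqrt (Real.cos a ^ 2 - Real.cos (2*a) * Real.sin θ ^ 2)
      + (2 * Real.sin (Real.pi/2 - θ) ^ 2 - 1) /
          Real.sqrt (Real.cos a ^ 2 - Real.cos (2*a) * Real.sin (Real.pi/2 - θ) ^ 2)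
    ≤ Real.cos (2*a) / (Real.cos a * Real.sin a) * Real.cos (2*θ) ^ 2 := by
  obtain ⟨hsa, hca, h2a⟩ := aux_facts ha
  have hA := inner_pos ha θ
  have hB := inner_pos ha (Real.pi/2 - θ)
  rw [Real.sin_pi_div_two_sub] at hB ⊢
  set s := Real.sin θ with hs
  set c := Real.cos θ with hc
  set P := Real.cos (2*a) with hP
  set A := Real.cos a ^ 2 - P * s ^ 2 with hAdef
  set B := Real.cos a ^ 2 - P * c ^ 2 with hBdef
  have hApos : 0 < A := lt_of_lt_of_le (by positivity) hA
  have hBpos : 0 < B := lt_of_lt_of_le (by positivity) hB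
  set sA := Real.sqrt A with hsA
  set sB := Real.sqrt B with hsB
  have hsApos : 0 < sA := Real.sqrt_pos.mpr hApos
  have hsBpos : 0 < sB := Real.sqrt_pos.mpr hBpos
  have hsA2 : sA ^ 2 = A := Real.sq_sqrt hApos.le
  have hsB2 : sB ^ 2 = B := Real.sq_sqrt hBpos.le
  have hpyth : s ^ 2 + c ^ 2 = 1 := Real.sin_sq_add_cos_sq θ
  have hc2θ : Real.cos (2*θ) = c ^ 2 - s ^ 2 := Real.cos_two_mul' θ
  have hc2a : P = Real.cos a ^ 2 - Real.sin a ^ 2 := Real.cos_two_mul' a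
  have hpytha : Real.sin a ^ 2 + Real.cos a ^ 2 = 1 := Real.sin_sq_add_cos_sq a
  -- A + B = 1
  have hABsum : A + B = 1 := by rw [hAdef, hBdef, hc2a]; nlinarith
  -- cos a * sin a ≤ sA * sB
  have hABprod : (Real.cos a * Real.sin a) ^ 2 ≤ (sA * sB) ^ 2 := by
    rw [mul_pow, mul_pow, hsA2, hsB2, hAdef, hBdef]
    nlinarith [sq_nonneg (P * s * c)]
  have hcs : Real.cos a * Real.sin a ≤ sA * sB := by
    have h1 : (0:ℝ) ≤ Real.cos a * Real.sin a := by positivity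
    have h2 : (0:ℝ) ≤ sA * sB := by positivity
    exact (pow_le_pow_iff_left₀ h1 h2 (by norm_num)).mp hABprod
  -- 1 ≤ sA + sB
  have hsumge : 1 ≤ sA + sB := by
    have hexp : (sA + sB) ^ 2 = sA ^ 2 + 2 * (sA * sB) + sB ^ 2 := by ring
    have h : 1 ≤ (sA + sB) ^ 2 := by
      rw [hexp, hsA2, hsB2]
      linarith [hABsum, (mul_pos hsApos hsBpos).le]
    exact (pow_le_pow_iff_left₀ (by norm_num : (0:ℝ) ≤ 1)
      (add_pos hsApos hsBpos).le (two_ne_zero)).mp (by simpa using h)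
  have hdenpos : 0 < sA * sB * (sA + sB) := by positivity
  -- exact value of the LHS
  have hval : (2 * s ^ 2 - 1) / sA + (2 * c ^ 2 - 1) / sB
      = P * Real.cos (2*θ) ^ 2 / (sA * sB * (sA + sB)) := by
    have hsA2' : sA ^ 2 = Real.cos a ^ 2 - P * s ^ 2 := hsA2.trans hAdef
    have hsB2' : sB ^ 2 = Real.cos a ^ 2 - P * c ^ 2 := hsB2.trans hBdef
    rw [eq_div_iff (ne_of_gt hdenpos), div_add_div _ _ (ne_of_gt hsApos) (ne_of_gt hsBpos),
      div_mul_eq_mul_div, div_eq_iff (ne_of_gt (mul_pos hsApos hsBpos))]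
    linear_combination (sA*sB*(2*c^2-1)) * hsA2' + (sA*sB*(2*s^2-1)) * hsB2'
      + (sA*sB*(2*sA*sB + 2*Real.cos a^2 - P*(s^2+c^2))) * hpyth
      - (P*sA*sB*(Real.cos (2*θ) + c^2 - s^2)) * hc2θ
  rw [hval]
  have hnum : 0 ≤ P * Real.cos (2*θ) ^ 2 := by positivity
  have hcspos : 0 < Real.cos a * Real.sin a := mul_pos hca hsa
  have hden2 : Real.cos a * Real.sin a ≤ sA * sB * (sA + sB) := by
    calc Real.cos a * Real.sin a ≤ sA * sB := hcs
      _ = sA * sB * 1 := by ring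
      _ ≤ sA * sB * (sA + sB) :=
          mul_le_mul_of_nonneg_left hsumge (by positivity)
  calc P * Real.cos (2*θ) ^ 2 / (sA * sB * (sA + sB))
      ≤ P * Real.cos (2*θ) ^ 2 / (Real.cos a * Real.sin a) :=
        div_le_div_of_nonneg_left hnum hcspos hden2
    _ = P / (Real.cos a * Real.sin a) * Real.cos (2*θ) ^ 2 := by ring

theorem stmt7 : ∀ a ∈ Ioo (0:ℝ) (Real.pi/4),
    deriv (fun a : ℝ => Real.cos a * ellE (Real.sqrt (1 - Real.tan a ^ 2))) a < 1/2 := by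
  intro a ha
  obtain ⟨ha0, ha4⟩ := ha
  have hpi := Real.pi_pos
  obtain ⟨hsa, hca, h2a⟩ := aux_facts ⟨ha0, ha4⟩
  -- Step 1: local equality of functions
  have heq : ∀ x ∈ Ioo (0:ℝ) (Real.pi/4),
      Real.cos x * ellE (Real.sqrt (1 - Real.tan x ^ 2))
        = ∫ θ in (0:ℝ)..(Real.pi/2),
            Real.sqrt (Real.cos x ^ 2 - Real.cos (2*x) * Real.sin θ ^ 2) := by
    intro x hx
    obtain ⟨hsx, hcx, h2x⟩ := aux_facts hx
    have htanlt : Real.tan x < 1 := by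
      have h := Real.tan_lt_tan_of_nonneg_of_lt_pi_div_two hx.1.le
        (by linarith : Real.pi/4 < Real.pi/2) hx.2
      rwa [Real.tan_pi_div_four] at h
    have htanpos : 0 ≤ Real.tan x :=
      (Real.tan_pos_of_pos_of_lt_pi_div_two hx.1 (by linarith [hx.2])).le
    have htan : 0 ≤ 1 - Real.tan x ^ 2 := by nlinarith
    rw [ellE, Real.sq_sqrt htan, ← intervalIntegral.integral_const_mul]
    refine intervalIntegral.integral_congr fun θ _ => ?_
    have hkey : Real.cos x ^ 2 * (1 - (1 - Real.tan x ^ 2) * Real.sin θ ^ 2)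
        = Real.cos x ^ 2 - Real.cos (2*x) * Real.sin θ ^ 2 := by
      rw [Real.cos_two_mul', Real.tan_eq_sin_div_cos]
      field_simp
      try ring
    show Real.cos x * Real.sqrt (1 - (1 - Real.tan x ^ 2) * Real.sin θ ^ 2)
      = Real.sqrt (Real.cos x ^ 2 - Real.cos (2*x) * Real.sin θ ^ 2)
    rw [← hkey, Real.sqrt_mul (by positivity : (0:ℝ) ≤ Real.cos x ^ 2),
      Real.sqrt_sq hcx.le]
  -- Step 2: rewrite the derivative
  have hev : (fun x => Real.cos x * ellE (Real.sqrt (1 - Real.tan x ^ 2)))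
      =ᶠ[nhds a] (fun x => ∫ θ in (0:ℝ)..(Real.pi/2),
        Real.sqrt (Real.cos x ^ 2 - Real.cos (2*x) * Real.sin θ ^ 2)) := by
    filter_upwards [Ioo_mem_nhds ha0 ha4] with x hx using heq x hx
  rw [hev.deriv_eq, (main_hasDerivAt ⟨ha0, ha4⟩).deriv]
  -- Step 3: bound the integral
  set P := Real.cos (2*a) with hPdef
  set g : ℝ → ℝ := fun θ => (2 * Real.sin θ ^ 2 - 1) /
      Real.sqrt (Real.cos a ^ 2 - P * Real.sin θ ^ 2) with hg
  have hApos : ∀ θ : ℝ, 0 < Real.cos a ^ 2 - P * Real.sin θ ^ 2 := fun θ =>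
    lt_of_lt_of_le (by positivity) (inner_pos ⟨ha0, ha4⟩ θ)
  have hgc : Continuous g := by
    apply Continuous.div (by fun_prop) ((cont_A a).sqrt)
    exact fun θ => ne_of_gt (Real.sqrt_pos.mpr (hApos θ))
  have hD : (∫ θ in (0:ℝ)..(Real.pi/2), Real.sin a * Real.cos a * (2 * Real.sin θ ^ 2 - 1) /
        Real.sqrt (Real.cos a ^ 2 - P * Real.sin θ ^ 2))
      = Real.sin a * Real.cos a * ∫ θ in (0:ℝ)..(Real.pi/2), g θ := by
    rw [← intervalIntegral.integral_const_mul]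
    apply intervalIntegral.integral_congr
    intro θ _
    rw [hg]
    ring
  rw [hD]
  set J := ∫ θ in (0:ℝ)..(Real.pi/2), g θ with hJ
  have hgrc : Continuous (fun θ => g (Real.pi/2 - θ)) := hgc.comp (by fun_prop)
  have hrefl : (∫ θ in (0:ℝ)..(Real.pi/2), g (Real.pi/2 - θ)) = J := by
    rw [intervalIntegral.integral_comp_sub_left g (Real.pi/2)]
    norm_num
    rfl
  have h2J : J + J = ∫ θ in (0:ℝ)..(Real.pi/2), (g θ + g (Real.pi/2 - θ)) := by
    rw [intervalIntegral.integral_add (hgc.intervalIntegrable _ _)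
      (hgrc.intervalIntegrable _ _), hrefl]
  have hmono : (∫ θ in (0:ℝ)..(Real.pi/2), (g θ + g (Real.pi/2 - θ)))
      ≤ ∫ θ in (0:ℝ)..(Real.pi/2), P / (Real.cos a * Real.sin a) * Real.cos (2*θ) ^ 2 := by
    apply intervalIntegral.integral_mono_on (by positivity)
      ((hgc.add hgrc).intervalIntegrable _ _) ((by fun_prop : Continuous
        (fun θ : ℝ => P / (Real.cos a * Real.sin a) * Real.cos (2*θ) ^ 2)).intervalIntegrable _ _)
    intro θ _
    exact sym_bound ⟨ha0, ha4⟩ θ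
  have hcos : (∫ θ in (0:ℝ)..(Real.pi/2), Real.cos (2*θ) ^ 2) = Real.pi / 4 := by
    have h := intervalIntegral.integral_comp_mul_left (a := (0:ℝ)) (b := Real.pi/2)
      (fun u => Real.cos u ^ 2) (two_ne_zero)
    rw [h]
    norm_num [integral_cos_sq]
    rw [show (2:ℝ)*(Real.pi/2) = Real.pi by ring, Real.sin_pi, Real.cos_pi]
    ring
  have hint2 : (∫ θ in (0:ℝ)..(Real.pi/2), P / (Real.cos a * Real.sin a) * Real.cos (2*θ) ^ 2)
      = P / (Real.cos a * Real.sin a) * (Real.pi / 4) := by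
    rw [intervalIntegral.integral_const_mul, hcos]
  rw [hint2] at hmono
  rw [← h2J] at hmono
  have hcsne : (Real.cos a * Real.sin a) ≠ 0 := by positivity
  have hmul := mul_le_mul_of_nonneg_left hmono (by positivity : (0:ℝ) ≤ Real.cos a * Real.sin a)
  have hmul2 : Real.cos a * Real.sin a * (P / (Real.cos a * Real.sin a) * (Real.pi / 4))
      = P * Real.pi / 4 := by field_simp
  rw [hmul2] at hmul
  have hP1 : P ≤ 1 := Real.cos_le_one _
  have hpi315 : Real.pi < 3.15 := Real.pi_lt_d2
  nlinarith [hmul, mul_pos hca hsa]
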